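/- Let a : ℕ → ℤ be the cubical Gromov coefficients with A = -1: a(0)=1, a(1)=-1, a(2)=-1, and 2·a(n) = -(∑_{k=0}^{n-2} a(k)·C(n-1,k)·2^{n-1-k} + ∑_{k=0}^{n-1} a(k)·C(n,k)·2^{n-k}) for n ≥ 3. Let E : ℕ → ℤ be the secant (Euler) numbers defined by E(0)=1 and, for n ≥ 1, 2·E(n) + ∑_{k=0}^{n-1} C(2n,2k)·2^{2n-2k}·E(k)·(-1)^{n-k} = 2·(-1)^n — equivalently E(n) are the Taylor coefficients of sec(x) = ∑ E(n)·x^{2n}/(2n)!. Then a(2n) = (-1)^n·E(n) for all n ≥ 0. -/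

import Mathlib

open Finset

lemma sum_range_even_odd (f : ℕ → ℤ) (n : ℕ) :
    ∑ i ∈ range (2 * n), f i = (∑ j ∈ range n, f (2 * j)) + ∑ j ∈ range n, f (2 * j + 1) := by
  induction n with
  | zero => simp
  | succ n ih =>
    have h : 2 * (n + 1) = 2 * n + 1 + 1 := by ring
    rw [h, sum_range_succ, sum_range_succ, ih, sum_range_succ, sum_range_succ]
    ring_nf

lemma sum_range_odd_split (f : ℕ → ℤ) (n : ℕ) :
    ∑ i ∈ range (2 * n + 1), f i
      = (∑ j ∈ range n, f (2 * j)) + (∑ j ∈ range n, f (2 * j + 1)) + f (2 * n) := by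
  rw [sum_range_succ, sum_range_even_odd]

lemma neg_one_pow_two_mul (j : ℕ) : ((-1 : ℤ)) ^ (2 * j) = 1 := by
  rw [pow_mul]; norm_num

lemma neg_one_pow_two_mul_add_one (j : ℕ) : ((-1 : ℤ)) ^ (2 * j + 1) = -1 := by
  rw [pow_succ, neg_one_pow_two_mul]; norm_num

lemma dbl_sum (g : ℕ → ℤ) (N : ℕ) :
    ∑ j ∈ range N, (g j + g j) = 2 * ∑ j ∈ range N, g j := by
  rw [Finset.mul_sum]; exact sum_congr rfl fun _ _ => (two_mul _).symm

lemma sum_choose_even (M : ℕ) (hM : 1 ≤ M) :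
    ∑ t ∈ range (M + 1), (((2 * M).choose (2 * t)) : ℤ) = 2 ^ (2 * M - 1) := by
  have h1 : ∑ i ∈ range (2 * M + 1), (((2 * M).choose i) : ℤ) = 2 ^ (2 * M) := by
    have := Nat.sum_range_choose (2 * M)
    exact_mod_cast congrArg (fun x : ℕ => (x : ℤ)) this
  have h2 : ∑ i ∈ range (2 * M + 1), (-1 : ℤ) ^ i * ((2 * M).choose i) = 0 :=
    Int.alternating_sum_range_choose_of_ne (by omega)
  have key : 2 * ∑ t ∈ range (M + 1), (((2 * M).choose (2 * t)) : ℤ) = 2 ^ (2 * M) + 0 := by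
    rw [← h1, ← h2, ← Finset.sum_add_distrib,
      sum_range_odd_split (fun i => ((2 * M).choose i : ℤ) + (-1) ^ i * ((2 * M).choose i)) M,
      sum_range_succ]
    simp only [neg_one_pow_two_mul, neg_one_pow_two_mul_add_one, one_mul, neg_one_mul]
    have z : ∑ j ∈ range M, ((((2 * M).choose (2 * j + 1)) : ℤ) + -(((2 * M).choose (2 * j + 1)) : ℤ)) = 0 := by
      simp
    rw [z, dbl_sum (fun j => (((2 * M).choose (2 * j)) : ℤ)) M]
    ring
  have e : (2 : ℤ) ^ (2 * M) = 2 * 2 ^ (2 * M - 1) := by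
    rw [← pow_succ']; congr 1; omega
  rw [e, add_zero] at key
  exact mul_left_cancel₀ (by norm_num) key

lemma sum_choose_even_odd_top (M : ℕ) :
    ∑ t ∈ range (M + 1), (((2 * M + 1).choose (2 * t)) : ℤ) = 2 ^ (2 * M) := by
  have h1 : ∑ i ∈ range (2 * M + 1 + 1), (((2 * M + 1).choose i) : ℤ) = 2 ^ (2 * M + 1) := by
    have := Nat.sum_range_choose (2 * M + 1)
    exact_mod_cast congrArg (fun x : ℕ => (x : ℤ)) this
  have h2 : ∑ i ∈ range (2 * M + 1 + 1), (-1 : ℤ) ^ i * ((2 * M + 1).choose i) = 0 :=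
    Int.alternating_sum_range_choose_of_ne (by omega)
  have e : 2 * M + 1 + 1 = 2 * (M + 1) := by ring
  have key : 2 * ∑ t ∈ range (M + 1), (((2 * M + 1).choose (2 * t)) : ℤ) = 2 ^ (2 * M + 1) + 0 := by
    rw [← h1, ← h2, ← Finset.sum_add_distrib, e,
      sum_range_even_odd (fun i => ((2 * M + 1).choose i : ℤ) + (-1) ^ i * ((2 * M + 1).choose i)) (M + 1)]
    simp only [neg_one_pow_two_mul, neg_one_pow_two_mul_add_one, one_mul, neg_one_mul]
    have z : ∑ j ∈ range (M + 1), ((((2 * M + 1).choose (2 * j + 1)) : ℤ) + -(((2 * M + 1).choose (2 * j + 1)) : ℤ)) = 0 := by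
      simp
    rw [z, dbl_sum (fun j => (((2 * M + 1).choose (2 * j)) : ℤ)) (M + 1)]
    ring
  have e2 : (2 : ℤ) ^ (2 * M + 1) = 2 * 2 ^ (2 * M) := by rw [← pow_succ']
  rw [e2, add_zero] at key
  exact mul_left_cancel₀ (by norm_num) key

lemma tri_even (n i t : ℕ) (h : i + t ≤ n) :
    (((2 * n).choose (2 * (i + t))) : ℤ) * (((2 * (i + t)).choose (2 * i)) : ℤ)
      = (((2 * n).choose (2 * i)) : ℤ) * (((2 * (n - i)).choose (2 * t)) : ℤ) := by
  have h1 : 2 * (i + t) ≤ 2 * n := by omega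
  have h2 : 2 * i ≤ 2 * (i + t) := by omega
  have key := Nat.choose_mul (n := 2 * n) h2
  have e1 : 2 * n - 2 * i = 2 * (n - i) := by omega
  have e2 : 2 * (i + t) - 2 * i = 2 * t := by omega
  rw [e1, e2] at key
  exact_mod_cast congrArg (fun x : ℕ => (x : ℤ)) key

lemma tri_odd (n i t : ℕ) (h : i + t ≤ n) :
    (((2 * n + 1).choose (2 * (i + t))) : ℤ) * (((2 * (i + t)).choose (2 * i)) : ℤ)
      = (((2 * n + 1).choose (2 * i)) : ℤ) * (((2 * (n - i) + 1).choose (2 * t)) : ℤ) := by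
  have h1 : 2 * (i + t) ≤ 2 * n + 1 := by omega
  have h2 : 2 * i ≤ 2 * (i + t) := by omega
  have key := Nat.choose_mul (n := 2 * n + 1) h2
  have e1 : 2 * n + 1 - 2 * i = 2 * (n - i) + 1 := by omega
  have e2 : 2 * (i + t) - 2 * i = 2 * t := by omega
  rw [e1, e2] at key
  exact_mod_cast congrArg (fun x : ℕ => (x : ℤ)) key

lemma convC (A : ℕ → ℤ) (n : ℕ) :
    ∑ j ∈ range (n + 1), ((2 * n).choose (2 * j) : ℤ) * (∑ i ∈ range (j + 1), ((2 * j).choose (2 * i) : ℤ) * A i) * 4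
      = ∑ k ∈ range (n + 1), ((2 * n).choose (2 * k) : ℤ) * A k * (2 * 4 ^ (n - k) + if k = n then 2 else 0) := by
  have step1 : ∀ j, ((2 * n).choose (2 * j) : ℤ) * (∑ i ∈ range (j + 1), ((2 * j).choose (2 * i) : ℤ) * A i) * 4
      = ∑ i ∈ range (j + 1), ((2 * n).choose (2 * j) : ℤ) * (((2 * j).choose (2 * i) : ℤ) * A i) * 4 := by
    intro j
    rw [Finset.mul_sum, Finset.sum_mul]
  rw [Finset.sum_congr rfl fun j _ => step1 j]
  -- swap
  have swap := Finset.sum_Ico_Ico_comm 0 (n + 1)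
    (fun i j => ((2 * n).choose (2 * j) : ℤ) * (((2 * j).choose (2 * i) : ℤ) * A i) * 4)
  simp only [← Finset.range_eq_Ico] at swap
  rw [show (∑ j ∈ range (n + 1), ∑ i ∈ range (j + 1),
        ((2 * n).choose (2 * j) : ℤ) * (((2 * j).choose (2 * i) : ℤ) * A i) * 4)
      = ∑ i ∈ range (n + 1), ∑ j ∈ Finset.Ico i (n + 1),
        ((2 * n).choose (2 * j) : ℤ) * (((2 * j).choose (2 * i) : ℤ) * A i) * 4 from swap.symm]
  apply Finset.sum_congr rfl
  intro i hi
  rw [Finset.mem_range] at hi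
  rw [Finset.sum_Ico_eq_sum_range]
  have hin : i ≤ n := by omega
  have elen : n + 1 - i = (n - i) + 1 := by omega
  rw [elen]
  have inner : ∀ t ∈ range ((n - i) + 1),
      ((2 * n).choose (2 * (i + t)) : ℤ) * (((2 * (i + t)).choose (2 * i) : ℤ) * A i) * 4
      = (((2 * n).choose (2 * i) : ℤ) * A i * 4) * (((2 * (n - i)).choose (2 * t)) : ℤ) := by
    intro t ht
    rw [Finset.mem_range] at ht
    have := tri_even n i t (by omega)
    calc ((2 * n).choose (2 * (i + t)) : ℤ) * (((2 * (i + t)).choose (2 * i) : ℤ) * A i) * 4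
        = (((2 * n).choose (2 * (i + t)) : ℤ) * ((2 * (i + t)).choose (2 * i) : ℤ)) * A i * 4 := by ring
      _ = (((2 * n).choose (2 * i) : ℤ) * (((2 * (n - i)).choose (2 * t)) : ℤ)) * A i * 4 := by rw [this]
      _ = (((2 * n).choose (2 * i) : ℤ) * A i * 4) * (((2 * (n - i)).choose (2 * t)) : ℤ) := by ring
  rw [Finset.sum_congr rfl inner, ← Finset.mul_sum]
  by_cases hieq : i = n
  · subst hieq
    simp
  · have hM : 1 ≤ n - i := by omega
    rw [sum_choose_even (n - i) hM, if_neg hieq, add_zero]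
    have h4 : (2 : ℤ) * 4 ^ (n - i) = 4 * 2 ^ (2 * (n - i) - 1) := by
      rw [show (4 : ℤ) = 2 ^ 2 by norm_num, ← pow_mul, ← pow_succ', ← pow_add]
      congr 1
      omega
    rw [h4]
    ring

lemma convD (A : ℕ → ℤ) (n : ℕ) :
    ∑ k ∈ range (n + 1), ((2 * n + 1).choose (2 * k) : ℤ) * 2 ^ (2 * n + 1 - 2 * k) * A k
      = ∑ j ∈ range (n + 1), ((2 * n + 1).choose (2 * j) : ℤ) * (∑ i ∈ range (j + 1), ((2 * j).choose (2 * i) : ℤ) * A i) * 2 := by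
  have step1 : ∀ j, ((2 * n + 1).choose (2 * j) : ℤ) * (∑ i ∈ range (j + 1), ((2 * j).choose (2 * i) : ℤ) * A i) * 2
      = ∑ i ∈ range (j + 1), ((2 * n + 1).choose (2 * j) : ℤ) * (((2 * j).choose (2 * i) : ℤ) * A i) * 2 := by
    intro j
    rw [Finset.mul_sum, Finset.sum_mul]
  rw [Finset.sum_congr rfl fun j _ => step1 j]
  have swap := Finset.sum_Ico_Ico_comm 0 (n + 1)
    (fun i j => ((2 * n + 1).choose (2 * j) : ℤ) * (((2 * j).choose (2 * i) : ℤ) * A i) * 2)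
  simp only [← Finset.range_eq_Ico] at swap
  rw [show (∑ j ∈ range (n + 1), ∑ i ∈ range (j + 1),
        ((2 * n + 1).choose (2 * j) : ℤ) * (((2 * j).choose (2 * i) : ℤ) * A i) * 2)
      = ∑ i ∈ range (n + 1), ∑ j ∈ Finset.Ico i (n + 1),
        ((2 * n + 1).choose (2 * j) : ℤ) * (((2 * j).choose (2 * i) : ℤ) * A i) * 2 from swap.symm]
  apply Finset.sum_congr rfl
  intro i hi
  rw [Finset.mem_range] at hi
  rw [Finset.sum_Ico_eq_sum_range]
  have hin : i ≤ n := by omega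
  have elen : n + 1 - i = (n - i) + 1 := by omega
  rw [elen]
  have inner : ∀ t ∈ range ((n - i) + 1),
      ((2 * n + 1).choose (2 * (i + t)) : ℤ) * (((2 * (i + t)).choose (2 * i) : ℤ) * A i) * 2
      = (((2 * n + 1).choose (2 * i) : ℤ) * A i * 2) * (((2 * (n - i) + 1).choose (2 * t)) : ℤ) := by
    intro t ht
    rw [Finset.mem_range] at ht
    have := tri_odd n i t (by omega)
    calc ((2 * n + 1).choose (2 * (i + t)) : ℤ) * (((2 * (i + t)).choose (2 * i) : ℤ) * A i) * 2
        = (((2 * n + 1).choose (2 * (i + t)) : ℤ) * ((2 * (i + t)).choose (2 * i) : ℤ)) * A i * 2 := by ring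
      _ = (((2 * n + 1).choose (2 * i) : ℤ) * (((2 * (n - i) + 1).choose (2 * t)) : ℤ)) * A i * 2 := by rw [this]
      _ = (((2 * n + 1).choose (2 * i) : ℤ) * A i * 2) * (((2 * (n - i) + 1).choose (2 * t)) : ℤ) := by ring
  rw [Finset.sum_congr rfl inner, ← Finset.mul_sum, sum_choose_even_odd_top (n - i)]
  have e : (2 : ℤ) ^ (2 * n + 1 - 2 * i) = 2 * 2 ^ (2 * (n - i)) := by
    rw [← pow_succ']
    congr 1
    omega
  rw [e]
  ring

section
variable (A : ℕ → ℤ)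

lemma G_eq_zero (hA0 : A 0 = 1)
    (HP : ∀ n, 1 ≤ n → ∑ k ∈ range n, ((2 * n).choose (2 * k) : ℤ) * 2 ^ (2 * n - 2 * k) * A k = 2 - 2 * A n) :
    ∀ n, 1 ≤ n → ∑ i ∈ range (n + 1), ((2 * n).choose (2 * i) : ℤ) * A i = 0 := by
  intro n
  induction n using Nat.strong_induction_on with
  | _ n ih =>
    intro hn
    have hyp : ∑ k ∈ range (n + 1), ((2 * n).choose (2 * k) : ℤ) * A k * (2 * 4 ^ (n - k) + if k = n then 2 else 0) = 4 := by
      rw [sum_range_succ]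
      have body : ∀ k ∈ range n, ((2 * n).choose (2 * k) : ℤ) * A k * (2 * 4 ^ (n - k) + if k = n then 2 else 0)
          = 2 * (((2 * n).choose (2 * k) : ℤ) * 2 ^ (2 * n - 2 * k) * A k) := by
        intro k hk
        rw [Finset.mem_range] at hk
        rw [if_neg (by omega)]
        have : (4 : ℤ) ^ (n - k) = 2 ^ (2 * n - 2 * k) := by
          rw [show (4 : ℤ) = 2 ^ 2 by norm_num, ← pow_mul]
          congr 1
          omega
        rw [this]
        ring
      rw [Finset.sum_congr rfl body, ← Finset.mul_sum, HP n hn]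
      simp only [Nat.choose_self, if_pos rfl]
      push_cast
      simp only [Nat.sub_self, pow_zero]
      ring
    have key := (convC A n).trans hyp
    -- split the sum in key
    rw [sum_range_succ] at key
    have mid : ∑ j ∈ range n, ((2 * n).choose (2 * j) : ℤ) * (∑ i ∈ range (j + 1), ((2 * j).choose (2 * i) : ℤ) * A i) * 4
        = ((2 * n).choose 0 : ℤ) * (∑ i ∈ range 1, ((0).choose (2 * i) : ℤ) * A i) * 4 := by
      apply Finset.sum_eq_single_of_mem 0 (Finset.mem_range.mpr (by omega))
      intro j hj hj0
      rw [Finset.mem_range] at hj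
      rw [ih j hj (by omega)]
      ring
    rw [mid] at key
    simp only [Nat.choose_self, Nat.choose_zero_right, Nat.cast_one, one_mul, mul_one] at key
    simp only [Finset.sum_range_one, Nat.choose_zero_right, Nat.cast_one, one_mul, hA0] at key
    norm_num at key
    linarith [key]

lemma Q_eq_two (hA0 : A 0 = 1)
    (HP : ∀ n, 1 ≤ n → ∑ k ∈ range n, ((2 * n).choose (2 * k) : ℤ) * 2 ^ (2 * n - 2 * k) * A k = 2 - 2 * A n) :
    ∀ n, ∑ k ∈ range (n + 1), ((2 * n + 1).choose (2 * k) : ℤ) * 2 ^ (2 * n + 1 - 2 * k) * A k = 2 := by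
  intro n
  rw [convD]
  have mid : ∑ j ∈ range (n + 1), ((2 * n + 1).choose (2 * j) : ℤ) * (∑ i ∈ range (j + 1), ((2 * j).choose (2 * i) : ℤ) * A i) * 2
      = ((2 * n + 1).choose 0 : ℤ) * (∑ i ∈ range 1, ((0).choose (2 * i) : ℤ) * A i) * 2 := by
    apply Finset.sum_eq_single_of_mem 0 (Finset.mem_range.mpr (by omega))
    intro j hj hj0
    rw [Finset.mem_range] at hj
    rw [G_eq_zero A hA0 HP j (by omega)]
    ring
  rw [mid]
  simp [hA0]

end

section
variable (A : ℕ → ℤ)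

lemma pascalR (n : ℕ) :
    ∑ k ∈ range (n + 1), ((2 * n + 1).choose (2 * k) : ℤ) * 2 ^ (2 * n + 1 - 2 * k) * A k
      = (∑ k ∈ range (n + 1), ((2 * n).choose (2 * k) : ℤ) * 2 ^ (2 * n + 1 - 2 * k) * A k)
        + ∑ j ∈ range n, ((2 * n).choose (2 * j + 1) : ℤ) * 2 ^ (2 * n - (2 * j + 1)) * A (j + 1) := by
  rw [Finset.sum_range_succ' (fun k => ((2 * n + 1).choose (2 * k) : ℤ) * 2 ^ (2 * n + 1 - 2 * k) * A k) n,
      Finset.sum_range_succ' (fun k => ((2 * n).choose (2 * k) : ℤ) * 2 ^ (2 * n + 1 - 2 * k) * A k) n]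
  have main : ∑ i ∈ range n, ((2 * n + 1).choose (2 * (i + 1)) : ℤ) * 2 ^ (2 * n + 1 - 2 * (i + 1)) * A (i + 1)
      = ∑ i ∈ range n, (((2 * n).choose (2 * (i + 1)) : ℤ) * 2 ^ (2 * n + 1 - 2 * (i + 1)) * A (i + 1)
          + ((2 * n).choose (2 * i + 1) : ℤ) * 2 ^ (2 * n - (2 * i + 1)) * A (i + 1)) := by
    apply Finset.sum_congr rfl
    intro j hj
    rw [Finset.mem_range] at hj
    have ee : 2 * n + 1 - 2 * (j + 1) = 2 * n - (2 * j + 1) := by omega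
    have ch : (2 * n + 1).choose (2 * (j + 1)) = (2 * n).choose (2 * j + 1) + (2 * n).choose (2 * (j + 1)) := by
      have e1 : 2 * (j + 1) = (2 * j + 1) + 1 := by omega
      rw [e1]
      exact Nat.choose_succ_succ (2 * n) (2 * j + 1)
    rw [ee, ch]
    push_cast
    ring
  rw [main, Finset.sum_add_distrib]
  have e0 : ((2 * n + 1).choose (2 * 0) : ℤ) = ((2 * n).choose (2 * 0) : ℤ) := by norm_num
  rw [e0]
  ring

lemma pascalU (n : ℕ) :
    ∑ k ∈ range (n + 2), ((2 * n + 2).choose (2 * k) : ℤ) * 2 ^ (2 * n + 2 - 2 * k) * A k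
      = (∑ k ∈ range (n + 2), ((2 * n + 1).choose (2 * k) : ℤ) * 2 ^ (2 * n + 2 - 2 * k) * A k)
        + ∑ j ∈ range (n + 1), ((2 * n + 1).choose (2 * j + 1) : ℤ) * 2 ^ (2 * n + 1 - (2 * j + 1)) * A (j + 1) := by
  rw [Finset.sum_range_succ' (fun k => ((2 * n + 2).choose (2 * k) : ℤ) * 2 ^ (2 * n + 2 - 2 * k) * A k) (n + 1),
      Finset.sum_range_succ' (fun k => ((2 * n + 1).choose (2 * k) : ℤ) * 2 ^ (2 * n + 2 - 2 * k) * A k) (n + 1)]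
  have main : ∑ i ∈ range (n + 1), ((2 * n + 2).choose (2 * (i + 1)) : ℤ) * 2 ^ (2 * n + 2 - 2 * (i + 1)) * A (i + 1)
      = ∑ i ∈ range (n + 1), (((2 * n + 1).choose (2 * (i + 1)) : ℤ) * 2 ^ (2 * n + 2 - 2 * (i + 1)) * A (i + 1)
          + ((2 * n + 1).choose (2 * i + 1) : ℤ) * 2 ^ (2 * n + 1 - (2 * i + 1)) * A (i + 1)) := by
    apply Finset.sum_congr rfl
    intro j hj
    rw [Finset.mem_range] at hj
    have ee : 2 * n + 2 - 2 * (j + 1) = 2 * n + 1 - (2 * j + 1) := by omega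
    have ch : (2 * n + 2).choose (2 * (j + 1)) = (2 * n + 1).choose (2 * j + 1) + (2 * n + 1).choose (2 * (j + 1)) := by
      have e1 : 2 * (j + 1) = (2 * j + 1) + 1 := by omega
      have e2 : 2 * n + 2 = (2 * n + 1) + 1 := by omega
      rw [e1, e2]
      exact Nat.choose_succ_succ (2 * n + 1) (2 * j + 1)
    rw [ee, ch]
    push_cast
    ring
  rw [main, Finset.sum_add_distrib]
  have e0 : ((2 * n + 2).choose (2 * 0) : ℤ) = ((2 * n + 1).choose (2 * 0) : ℤ) := by norm_num
  rw [e0]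
  ring

variable (hA0 : A 0 = 1)
variable (HP : ∀ n, 1 ≤ n → ∑ k ∈ range n, ((2 * n).choose (2 * k) : ℤ) * 2 ^ (2 * n - 2 * k) * A k = 2 - 2 * A n)

include hA0 HP

lemma doubled (n : ℕ) (hn : 1 ≤ n) :
    ∑ k ∈ range (n + 1), ((2 * n).choose (2 * k) : ℤ) * 2 ^ (2 * n + 1 - 2 * k) * A k = 4 - 2 * A n := by
  have body : ∀ k ∈ range (n + 1), ((2 * n).choose (2 * k) : ℤ) * 2 ^ (2 * n + 1 - 2 * k) * A k
      = 2 * (((2 * n).choose (2 * k) : ℤ) * 2 ^ (2 * n - 2 * k) * A k) := by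
    intro k hk
    rw [Finset.mem_range] at hk
    rw [show 2 * n + 1 - 2 * k = (2 * n - 2 * k) + 1 by omega, pow_succ']
    ring
  rw [Finset.sum_congr rfl body, ← Finset.mul_sum, sum_range_succ, HP n hn]
  simp only [Nat.choose_self, Nat.sub_self, pow_zero]
  push_cast
  ring

lemma Rval (n : ℕ) (hn : 1 ≤ n) :
    ∑ j ∈ range n, ((2 * n).choose (2 * j + 1) : ℤ) * 2 ^ (2 * n - (2 * j + 1)) * A (j + 1)
      = 2 * A n - 2 := by
  have q := Q_eq_two A hA0 HP n
  rw [pascalR, doubled A hA0 HP n hn] at q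
  linarith

lemma Uval (n : ℕ) :
    ∑ j ∈ range (n + 1), ((2 * n + 1).choose (2 * j + 1) : ℤ) * 2 ^ (2 * n + 1 - (2 * j + 1)) * A (j + 1)
      = -A (n + 1) - 2 := by
  have lhs : ∑ k ∈ range (n + 2), ((2 * n + 2).choose (2 * k) : ℤ) * 2 ^ (2 * n + 2 - 2 * k) * A k
      = 2 - A (n + 1) := by
    have hp := HP (n + 1) (by omega)
    rw [show 2 * (n + 1) = 2 * n + 2 by ring] at hp
    rw [sum_range_succ, hp, show 2 * (n + 1) = 2 * n + 2 by ring]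
    simp only [Nat.choose_self, Nat.sub_self, pow_zero]
    push_cast
    ring
  have mid : ∑ k ∈ range (n + 2), ((2 * n + 1).choose (2 * k) : ℤ) * 2 ^ (2 * n + 2 - 2 * k) * A k = 4 := by
    rw [sum_range_succ]
    have z : ((2 * n + 1).choose (2 * (n + 1)) : ℤ) = 0 := by
      rw [Nat.choose_eq_zero_of_lt (by omega)]
      norm_num
    rw [z]
    have body : ∀ k ∈ range (n + 1), ((2 * n + 1).choose (2 * k) : ℤ) * 2 ^ (2 * n + 2 - 2 * k) * A k
        = 2 * (((2 * n + 1).choose (2 * k) : ℤ) * 2 ^ (2 * n + 1 - 2 * k) * A k) := by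
      intro k hk
      rw [Finset.mem_range] at hk
      rw [show 2 * n + 2 - 2 * k = (2 * n + 1 - 2 * k) + 1 by omega, pow_succ']
      ring
    rw [Finset.sum_congr rfl body, ← Finset.mul_sum, Q_eq_two A hA0 HP n]
    ring
  have pu := pascalU A n
  rw [lhs, mid] at pu
  linarith

lemma main_T : ∀ m, ∑ k ∈ range (m + 1), A ((k + 1) / 2) * (m.choose k : ℤ) * 2 ^ (m - k)
    = (-1) ^ m * A ((m + 1) / 2) := by
  intro m
  rcases Nat.even_or_odd m with he | ho
  · obtain ⟨r, hr⟩ := he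
    have hm : m = 2 * r := by omega
    subst hm
    rcases Nat.eq_zero_or_pos r with hr0 | hrpos
    · subst hr0
      simp [hA0]
    rw [sum_range_odd_split (fun k => A ((k + 1) / 2) * ((2 * r).choose k : ℤ) * 2 ^ (2 * r - k)) r]
    have ev : ∑ j ∈ range r, A ((2 * j + 1) / 2) * ((2 * r).choose (2 * j) : ℤ) * 2 ^ (2 * r - 2 * j)
        = ∑ j ∈ range r, ((2 * r).choose (2 * j) : ℤ) * 2 ^ (2 * r - 2 * j) * A j := by
      apply Finset.sum_congr rfl
      intro j hj
      rw [show (2 * j + 1) / 2 = j by omega]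
      ring
    have od : ∑ j ∈ range r, A ((2 * j + 1 + 1) / 2) * ((2 * r).choose (2 * j + 1) : ℤ) * 2 ^ (2 * r - (2 * j + 1))
        = ∑ j ∈ range r, ((2 * r).choose (2 * j + 1) : ℤ) * 2 ^ (2 * r - (2 * j + 1)) * A (j + 1) := by
      apply Finset.sum_congr rfl
      intro j hj
      rw [show (2 * j + 1 + 1) / 2 = j + 1 by omega]
      ring
    rw [ev, od, HP r hrpos, Rval A hA0 HP r hrpos]
    rw [show (2 * r + 1) / 2 = r by omega, neg_one_pow_two_mul]
    simp only [Nat.choose_self, Nat.sub_self, pow_zero, Nat.cast_one]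
    ring
  · obtain ⟨r, hr⟩ := ho
    subst hr
    rw [show 2 * r + 1 + 1 = 2 * (r + 1) by ring,
      sum_range_even_odd (fun k => A ((k + 1) / 2) * ((2 * r + 1).choose k : ℤ) * 2 ^ (2 * r + 1 - k)) (r + 1)]
    have ev : ∑ j ∈ range (r + 1), A ((2 * j + 1) / 2) * ((2 * r + 1).choose (2 * j) : ℤ) * 2 ^ (2 * r + 1 - 2 * j)
        = ∑ j ∈ range (r + 1), ((2 * r + 1).choose (2 * j) : ℤ) * 2 ^ (2 * r + 1 - 2 * j) * A j := by
      apply Finset.sum_congr rfl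
      intro j hj
      rw [show (2 * j + 1) / 2 = j by omega]
      ring
    have od : ∑ j ∈ range (r + 1), A ((2 * j + 1 + 1) / 2) * ((2 * r + 1).choose (2 * j + 1) : ℤ) * 2 ^ (2 * r + 1 - (2 * j + 1))
        = ∑ j ∈ range (r + 1), ((2 * r + 1).choose (2 * j + 1) : ℤ) * 2 ^ (2 * r + 1 - (2 * j + 1)) * A (j + 1) := by
      apply Finset.sum_congr rfl
      intro j hj
      rw [show (2 * j + 1 + 1) / 2 = j + 1 by omega]
      ring
    rw [ev, od, Q_eq_two A hA0 HP r, Uval A hA0 HP r]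
    rw [show 2 * (r + 1) / 2 = r + 1 by omega, neg_one_pow_two_mul_add_one]
    ring

end

theorem stmt_19 (a : ℕ → ℤ)
    (h0 : a 0 = 1) (h1 : a 1 = -1) (h2 : a 2 = -1)
    (hrec : ∀ n, 3 ≤ n →
      2 * a n = -((∑ k ∈ Finset.range (n - 1), a k * ((n - 1).choose k : ℤ) * 2 ^ (n - 1 - k)) +
        ∑ k ∈ Finset.range n, a k * (n.choose k : ℤ) * 2 ^ (n - k)))
    (E : ℕ → ℤ) (hE0 : E 0 = 1)
    (hErec : ∀ n, 1 ≤ n →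
      2 * E n + ∑ k ∈ Finset.range n,
        ((2 * n).choose (2 * k) : ℤ) * 2 ^ (2 * n - 2 * k) * E k * (-1) ^ (n - k)
        = 2 * (-1) ^ n) :
    ∀ n, a (2 * n) = (-1) ^ n * E n := by
  set A : ℕ → ℤ := fun n => (-1) ^ n * E n with hA
  have hA0 : A 0 = 1 := by simp [hA, hE0]
  have HP : ∀ n, 1 ≤ n → ∑ k ∈ range n, ((2 * n).choose (2 * k) : ℤ) * 2 ^ (2 * n - 2 * k) * A k = 2 - 2 * A n := by
    intro n hn
    have h := hErec n hn
    have key : ∑ k ∈ range n, ((2 * n).choose (2 * k) : ℤ) * 2 ^ (2 * n - 2 * k) * A k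
        = (-1 : ℤ) ^ n * ∑ k ∈ range n, ((2 * n).choose (2 * k) : ℤ) * 2 ^ (2 * n - 2 * k) * E k * (-1) ^ (n - k) := by
      rw [Finset.mul_sum]
      apply Finset.sum_congr rfl
      intro k hk
      rw [Finset.mem_range] at hk
      have hpow : ((-1 : ℤ)) ^ n * (-1) ^ (n - k) = (-1) ^ k := by
        rw [← pow_add, show n + (n - k) = k + 2 * (n - k) by omega, pow_add, pow_mul]
        norm_num
      simp only [hA]
      linear_combination (-(((2 * n).choose (2 * k) : ℤ) * 2 ^ (2 * n - 2 * k) * E k)) * hpow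
    have hsum : ∑ k ∈ range n, ((2 * n).choose (2 * k) : ℤ) * 2 ^ (2 * n - 2 * k) * E k * (-1) ^ (n - k)
        = 2 * (-1 : ℤ) ^ n - 2 * E n := by linarith
    rw [key, hsum]
    have hsq : ((-1 : ℤ)) ^ n * (-1) ^ n = 1 := by
      rw [← pow_add, show n + n = 2 * n by ring, neg_one_pow_two_mul]
    simp only [hA]
    linear_combination (2 : ℤ) * hsq
  have hE1 : E 1 = 1 := by
    have h := hErec 1 (le_refl 1)
    simp [hE0] at h
    linarith
  have Tm := main_T A hA0 HP
  have Sm : ∀ M, ∑ k ∈ range M, A ((k + 1) / 2) * (M.choose k : ℤ) * 2 ^ (M - k)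
      = (-1) ^ M * A ((M + 1) / 2) - A ((M + 1) / 2) := by
    intro M
    have hh := Tm M
    rw [sum_range_succ] at hh
    simp only [Nat.choose_self, Nat.sub_self, pow_zero, Nat.cast_one, mul_one] at hh
    linarith
  have hab : ∀ m, a m = A ((m + 1) / 2) := by
    intro m
    induction m using Nat.strong_induction_on with
    | _ m ih =>
      match m, ih with
      | 0, _ => simpa [h0] using hA0.symm
      | 1, _ => simp [h1, hA, hE1]
      | 2, _ => simp [h2, hA, hE1]
      | (m + 3), ih =>
        have h := hrec (m + 3) (by omega)
        simp only [show m + 3 - 1 = m + 2 from rfl] at h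
        have ha1 : ∑ k ∈ range (m + 2), a k * ((m + 2).choose k : ℤ) * 2 ^ (m + 2 - k)
            = (-1) ^ (m + 2) * A ((m + 2 + 1) / 2) - A ((m + 2 + 1) / 2) := by
          have conv1 : ∑ k ∈ range (m + 2), a k * ((m + 2).choose k : ℤ) * 2 ^ (m + 2 - k)
              = ∑ k ∈ range (m + 2), A ((k + 1) / 2) * ((m + 2).choose k : ℤ) * 2 ^ (m + 2 - k) :=
            Finset.sum_congr rfl (fun k hk => by
              rw [Finset.mem_range] at hk
              rw [ih k (by omega)])
          rw [conv1]
          exact Sm (m + 2)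
        have ha2 : ∑ k ∈ range (m + 3), a k * ((m + 3).choose k : ℤ) * 2 ^ (m + 3 - k)
            = (-1) ^ (m + 3) * A ((m + 3 + 1) / 2) - A ((m + 3 + 1) / 2) := by
          have conv2 : ∑ k ∈ range (m + 3), a k * ((m + 3).choose k : ℤ) * 2 ^ (m + 3 - k)
              = ∑ k ∈ range (m + 3), A ((k + 1) / 2) * ((m + 3).choose k : ℤ) * 2 ^ (m + 3 - k) :=
            Finset.sum_congr rfl (fun k hk => by
              rw [Finset.mem_range] at hk
              rw [ih k (by omega)])
          rw [conv2]
          exact Sm (m + 3)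
        rw [ha1, ha2] at h
        rcases Nat.even_or_odd m with he | ho
        · obtain ⟨r, hr⟩ := he
          have p2 : ((-1 : ℤ)) ^ (m + 2) = 1 := by
            rw [show m + 2 = 2 * (r + 1) by omega, neg_one_pow_two_mul]
          have p3 : ((-1 : ℤ)) ^ (m + 3) = -1 := by
            rw [show m + 3 = 2 * (r + 1) + 1 by omega, neg_one_pow_two_mul_add_one]
          rw [p2, p3] at h
          linarith
        · obtain ⟨r, hr⟩ := ho
          have p2 : ((-1 : ℤ)) ^ (m + 2) = -1 := by
            rw [show m + 2 = 2 * (r + 1) + 1 by omega, neg_one_pow_two_mul_add_one]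
          have p3 : ((-1 : ℤ)) ^ (m + 3) = 1 := by
            rw [show m + 3 = 2 * (r + 2) by omega, neg_one_pow_two_mul]
          rw [p2, p3] at h
          have e : (m + 2 + 1) / 2 = (m + 3 + 1) / 2 := by omega
          rw [e] at h
          linarith
  intro n
  have := hab (2 * n)
  rw [show (2 * n + 1) / 2 = n by omega] at this
  simpa [hA] using this
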